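/- (Euler's theorem) For a triangle with circumcenter O, incenter I, circumradius R, and inradius r, one has |OI|² = R² − 2Rr. -/

import Mathlib

open scoped RealInnerProductSpace


theorem euler_OI
    (u v w : EuclideanSpace ℝ (Fin 2)) (R a b c s F r : ℝ)
    (hu : ‖u‖ = R) (hv : ‖v‖ = R) (hw : ‖w‖ = R)
    (ha : a = ‖v - w‖) (hb : b = ‖u - w‖) (hc : c = ‖u - v‖)
    (ha0 : 0 < a) (hb0 : 0 < b) (hc0 : 0 < c)
    (hs : s = (a + b + c) / 2)
    (hF : F ^ 2 = s * (s - a) * (s - b) * (s - c))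
    (hr : r = F / s)
    (hRr : R * r = a * b * c / (4 * s)) :
    ‖(2 * s)⁻¹ • (a • u + b • v + c • w)‖ ^ 2 = R ^ 2 - 2 * R * r := by
  have hs0 : 0 < s := by rw [hs]; linarith
  have huv : (inner ℝ u v : ℝ) = R ^ 2 - c ^ 2 / 2 := by
    have h := norm_sub_sq_real u v
    rw [← hc, hu, hv] at h
    nlinarith [h]
  have huw : (inner ℝ u w : ℝ) = R ^ 2 - b ^ 2 / 2 := by
    have h := norm_sub_sq_real u w
    rw [← hb, hu, hw] at h
    nlinarith [h]
  have hvw : (inner ℝ v w : ℝ) = R ^ 2 - a ^ 2 / 2 := by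
    have h := norm_sub_sq_real v w
    rw [← ha, hv, hw] at h
    nlinarith [h]
  have huu : (inner ℝ u u : ℝ) = R ^ 2 := by rw [real_inner_self_eq_norm_sq, hu]
  have hvv : (inner ℝ v v : ℝ) = R ^ 2 := by rw [real_inner_self_eq_norm_sq, hv]
  have hww : (inner ℝ w w : ℝ) = R ^ 2 := by rw [real_inner_self_eq_norm_sq, hw]
  have huv2 : (inner ℝ v u : ℝ) = R ^ 2 - c ^ 2 / 2 := by rw [real_inner_comm]; exact huv
  have huw2 : (inner ℝ w u : ℝ) = R ^ 2 - b ^ 2 / 2 := by rw [real_inner_comm]; exact huw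
  have hvw2 : (inner ℝ w v : ℝ) = R ^ 2 - a ^ 2 / 2 := by rw [real_inner_comm]; exact hvw
  have hx : ‖a • u + b • v + c • w‖ ^ 2
      = R ^ 2 * (a + b + c) ^ 2 - a * b * c * (a + b + c) := by
    rw [← real_inner_self_eq_norm_sq]
    simp only [inner_add_left, inner_add_right, real_inner_smul_left,
      real_inner_smul_right, huv2, huw2, hvw2, huv, huw, hvw, huu, hvv, hww]
    ring
  have h2s : (2 * s) = a + b + c := by rw [hs]; ring
  rw [norm_smul, mul_pow, hx, Real.norm_eq_abs]
  rw [abs_of_pos (by positivity : (0:ℝ) < (2 * s)⁻¹)]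
  have h2Rr : 2 * R * r = a * b * c / (2 * s) := by
    rw [mul_assoc, hRr]; field_simp; ring
  rw [h2Rr, h2s]
  have hpos : (0:ℝ) < a + b + c := by linarith
  field_simp
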